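/- Let u be a negative plurisubharmonic function on the open unit ball 𝔹^{2n} of ℂⁿ. For 0 < a, ε < 1 and ‖z‖ < 1-ε define u_{a,ε}(z) = (sup{u((1+r)φ(z)) : φ ∈ U(n), ‖φ - Id‖ < a, 0 ≤ r ≤ ε})^*, the upper semicontinuous regularization of the indicated supremum. Then u_{a,ε} is plurisubharmonic on the ball of radius 1-ε and, for every z ∈ 𝔹^{2n}, lim_{a→0⁺} lim_{ε→0⁺} u_{a,ε}(z) = u(z). -/

import Mathlib

open MeasureTheory Filter Metric Topology ENNReal

noncomputable section

/-- `ℂⁿ` with its Euclidean structure. -/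
abbrev Cn (n : ℕ) : Type := EuclideanSpace ℂ (Fin n)

instance (n : ℕ) : MeasurableSpace (Cn n) :=
  MeasurableSpace.comap (WithLp.ofLp (p := 2)) (MeasurableSpace.pi : MeasurableSpace (Fin n → ℂ))

instance (n : ℕ) : BorelSpace (Cn n) := PiLp.borelSpace 2

instance (n : ℕ) : MeasureSpace (Cn n) :=
  { volume := Measure.map (WithLp.toLp 2) (MeasureTheory.MeasureSpace.pi.volume : Measure (Fin n → ℂ)) }

variable {n : ℕ}

/-- The "positive part" of an extended real number, as an element of `ℝ≥0∞`. -/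
def EReal.posPart (x : EReal) : ℝ≥0∞ := if x = ⊤ then ⊤ else ENNReal.ofReal x.toReal

/-- The (possibly infinite) integral of an `EReal`-valued function, defined as the
difference of the lower integrals of its positive and negative parts. -/
def erealIntegral {α : Type*} [MeasurableSpace α] (μ : Measure α) (f : α → EReal) : EReal :=
  ((∫⁻ a, (f a).posPart ∂μ : ℝ≥0∞) : EReal) - ((∫⁻ a, (-(f a)).posPart ∂μ : ℝ≥0∞) : EReal)

/-- A function `u : ℂⁿ → [-∞, ∞)` is plurisubharmonic on an (open) set `Ω` if it is upper
semicontinuous on `Ω`, takes values in `[-∞, ∞)` on `Ω`, and satisfies the sub-mean value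
inequality on every circle (inside `Ω`) contained in a complex line. -/
def PlurisubharmonicOn (Ω : Set (Cn n)) (u : Cn n → EReal) : Prop :=
  UpperSemicontinuousOn u Ω ∧ (∀ z ∈ Ω, u z ≠ ⊤) ∧
  ∀ z ∈ Ω, ∀ w : Cn n, ∀ r : ℝ, 0 < r →
    (∀ c : ℂ, ‖c‖ ≤ r → z + c • w ∈ Ω) →
    ((2 * Real.pi : ℝ) : EReal) * u z ≤
      erealIntegral (volume.restrict (Set.Ioc (0 : ℝ) (2 * Real.pi)))
        (fun θ => u (z + ((r : ℂ) * Complex.exp (θ * Complex.I)) • w))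

/-- The second derivative of `f` at `z` evaluated on the pair of vectors `(v, w)`. -/
def hess2 (f : Cn n → ℝ) (z v w : Cn n) : ℝ := iteratedFDeriv ℝ 2 f z ![v, w]

/-- The (diagonal of the) Levi form `L_f(z; v) = ∑ ∂²f/∂z_j∂z̄_k v_j v̄_k` of a real-valued
`C²` function, expressed via real second derivatives. -/
def leviForm (f : Cn n → ℝ) (z v : Cn n) : ℝ :=
  (hess2 f z v v + hess2 f z ((Complex.I : ℂ) • v) ((Complex.I : ℂ) • v)) / 4

/-- The complex derivative `∂f(z)(v) = ∑_j ∂f/∂z_j(z) v_j` of a real-valued function. -/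
def wirtingerDeriv (f : Cn n → ℝ) (z v : Cn n) : ℂ :=
  (((fderiv ℝ f z v : ℝ) : ℂ) - Complex.I * ((fderiv ℝ f z ((Complex.I : ℂ) • v) : ℝ) : ℂ)) / 2

/-- The complex Hessian matrix `(∂²f/∂z_j∂z̄_k(z))_{j,k}` of a real-valued function,
expressed via real second derivatives. -/
def complexHessian (f : Cn n → ℝ) (z : Cn n) : Matrix (Fin n) (Fin n) ℂ :=
  Matrix.of fun j k =>
    (((hess2 f z (EuclideanSpace.single j 1) (EuclideanSpace.single k 1)
        + hess2 f z ((Complex.I : ℂ) • EuclideanSpace.single j 1)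
            ((Complex.I : ℂ) • EuclideanSpace.single k 1)) / 4 : ℝ) : ℂ)
    + Complex.I * (((hess2 f z (EuclideanSpace.single j 1)
            ((Complex.I : ℂ) • EuclideanSpace.single k 1)
        - hess2 f z ((Complex.I : ℂ) • EuclideanSpace.single j 1)
            (EuclideanSpace.single k 1)) / 4 : ℝ) : ℂ)

/-- The density of the Monge–Ampère measure `(dd^c f)^n` of a `C²` function `f` with respect
to Lebesgue measure: `(dd^c f)^n = 4^n n! det(∂²f/∂z_j∂z̄_k) dV`. -/
def maDensity (f : Cn n → ℝ) (z : Cn n) : ℝ :=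
  (4 : ℝ) ^ n * (Nat.factorial n) * ((complexHessian f z).det).re

/-- `v` is a decreasing sequence of `C²` plurisubharmonic functions on `Ω`
converging pointwise to `u`. -/
def IsSmoothPshApprox (Ω : Set (Cn n)) (u : Cn n → EReal) (v : ℕ → Cn n → ℝ) : Prop :=
  (∀ j, ContDiffOn ℝ 2 (v j) Ω) ∧
  (∀ j, PlurisubharmonicOn Ω fun z => ((v j z : ℝ) : EReal)) ∧
  (∀ z ∈ Ω, Antitone fun j => v j z) ∧
  (∀ z ∈ Ω, Tendsto (fun j => ((v j z : ℝ) : EReal)) atTop (nhds (u z)))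

/-- `μ` is the (Bedford–Taylor–Cegrell) Monge–Ampère measure `(dd^c u)^n` of `u` on `Ω`:
there is at least one decreasing `C²` plurisubharmonic approximation of `u` on `Ω`, and along
every such approximation the smooth Monge–Ampère measures converge weakly to `μ`. -/
def IsMongeAmpereOf (Ω : Set (Cn n)) (u : Cn n → EReal) (μ : Measure (Cn n)) : Prop :=
  (∃ v, IsSmoothPshApprox Ω u v) ∧
  ∀ v, IsSmoothPshApprox Ω u v →
    ∀ f : Cn n → ℝ, Continuous f → HasCompactSupport f → tsupport f ⊆ Ω →
      Tendsto (fun j => ∫ z in Ω, f z * maDensity (v j) z) atTop (nhds (∫ z, f z ∂μ))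

/-- The Monge–Ampère measure `(dd^c u)^n` of `u` on `Ω` (junk value if it does not exist). -/
def mongeAmpere (Ω : Set (Cn n)) (u : Cn n → EReal) : Measure (Cn n) :=
  letI := Classical.propDecidable (∃ μ, IsMongeAmpereOf Ω u μ)
  if h : ∃ μ, IsMongeAmpereOf Ω u μ then h.choose else 0

/-- The Cegrell class `𝓔₀(Ω)`: bounded plurisubharmonic functions on `Ω` with boundary
limit `0` and finite total Monge–Ampère mass. -/
def InE0 (Ω : Set (Cn n)) (u : Cn n → EReal) : Prop :=
  PlurisubharmonicOn Ω u ∧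
  (∃ C : ℝ, ∀ z ∈ Ω, ((-C : ℝ) : EReal) ≤ u z ∧ u z ≤ ((C : ℝ) : EReal)) ∧
  (∀ ξ ∈ frontier Ω, Tendsto u (nhdsWithin ξ Ω) (nhds (0 : EReal))) ∧
  mongeAmpere Ω u Ω < ⊤

/-- The Cegrell class `𝓕(Ω)`: plurisubharmonic `u` admitting a decreasing sequence in
`𝓔₀(Ω)` converging pointwise to `u` with uniformly bounded Monge–Ampère masses. -/
def InCegrellF (Ω : Set (Cn n)) (u : Cn n → EReal) : Prop :=
  PlurisubharmonicOn Ω u ∧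
  ∃ v : ℕ → Cn n → EReal,
    (∀ j, InE0 Ω (v j)) ∧
    (∀ z ∈ Ω, Antitone fun j => v j z) ∧
    (∀ z ∈ Ω, Tendsto (fun j => v j z) atTop (nhds (u z))) ∧
    (⨆ j, mongeAmpere Ω (v j) Ω) < ⊤

/-- A bounded strictly pseudoconvex domain: a bounded domain `Ω = {ρ < 0}` for some `C²`
defining function `ρ` on a neighborhood of `closure Ω` with nonvanishing gradient on `∂Ω`
and `dd^c ρ ≥ c · dd^c |z|²` for some `c > 0`. -/
def IsStrictlyPseudoconvexDomain (Ω : Set (Cn n)) : Prop :=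
  IsOpen Ω ∧ IsConnected Ω ∧ Bornology.IsBounded Ω ∧
  ∃ (U : Set (Cn n)) (ρ : Cn n → ℝ) (c : ℝ),
    IsOpen U ∧ closure Ω ⊆ U ∧ ContDiffOn ℝ 2 ρ U ∧
    Ω = {z ∈ U | ρ z < 0} ∧
    (∀ z ∈ frontier Ω, fderiv ℝ ρ z ≠ 0) ∧
    0 < c ∧ (∀ z ∈ U, ∀ v : Cn n, c * ‖v‖ ^ 2 ≤ leviForm ρ z v)

/-- A bounded hyperconvex domain: a bounded domain carrying a negative plurisubharmonic
exhaustion function. -/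
def IsHyperconvexDomain (Ω : Set (Cn n)) : Prop :=
  IsOpen Ω ∧ IsConnected Ω ∧ Bornology.IsBounded Ω ∧
  ∃ φ : Cn n → EReal, PlurisubharmonicOn Ω φ ∧ (∀ z ∈ Ω, φ z < 0) ∧
    ∀ c : ℝ, c < 0 →
      IsCompact (closure {z ∈ Ω | φ z < (c : EReal)}) ∧
        closure {z ∈ Ω | φ z < (c : EReal)} ⊆ Ω

/-- A maximal plurisubharmonic function on `Ω`. -/
def IsMaximalPSH (Ω : Set (Cn n)) (u : Cn n → EReal) : Prop :=
  PlurisubharmonicOn Ω u ∧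
  ∀ v, PlurisubharmonicOn Ω v → ∀ K : Set (Cn n), IsCompact K → K ⊆ Ω →
    (∀ z ∈ Ω \ K, v z ≤ u z) → ∀ z ∈ Ω, v z ≤ u z

/-- The Cegrell class `𝓝(Ω)`: plurisubharmonic functions in the domain of definition of the
Monge–Ampère operator whose smallest maximal plurisubharmonic majorant is identically zero. -/
def InClassN (Ω : Set (Cn n)) (u : Cn n → EReal) : Prop :=
  PlurisubharmonicOn Ω u ∧ (∃ μ, IsMongeAmpereOf Ω u μ) ∧ (∀ z ∈ Ω, u z ≤ 0) ∧
  ∀ w, IsMaximalPSH Ω w → (∀ z ∈ Ω, u z ≤ w z) → ∀ z ∈ Ω, (0 : EReal) ≤ w z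

/-- The upper semicontinuous regularization `v*` of a function `v`. -/
def uscRegularization (f : Cn n → EReal) (z : Cn n) : EReal := Filter.limsup f (nhds z)


/-- The supremum `sup {u((1+r)φ(z)) : φ ∈ U(n), ‖φ - Id‖ < a, 0 ≤ r ≤ ε}`. -/
def dilatedSup {n : ℕ} (u : Cn n → EReal) (a ε : ℝ) (z : Cn n) : EReal :=
  sSup {y : EReal | ∃ φ : Cn n ≃ₗᵢ[ℂ] Cn n,
    ‖φ.toLinearIsometry.toContinuousLinearMap - ContinuousLinearMap.id ℂ (Cn n)‖ < a ∧
    ∃ r : ℝ, 0 ≤ r ∧ r ≤ ε ∧ y = u ((1 + r : ℝ) • φ z)}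

/-- The regularization `u_{a,ε} = (sup {u((1+r)φ(·)) : φ ∈ U(n), ‖φ - Id‖ < a, 0 ≤ r ≤ ε})^*`. -/
def dilatedSupStar {n : ℕ} (u : Cn n → EReal) (a ε : ℝ) : Cn n → EReal :=
  uscRegularization (dilatedSup u a ε)

/-! ### Auxiliary lemmas -/

section Aux

lemma posPart_top' : (⊤ : EReal).posPart = ⊤ := if_pos rfl

lemma posPart_of_ne_top {x : EReal} (h : x ≠ ⊤) : x.posPart = ENNReal.ofReal x.toReal := if_neg h

lemma ePosPart_nonpos {x : EReal} (h : x ≤ 0) : x.posPart = 0 := by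
  have hx : x ≠ ⊤ := by rintro rfl; simp at h
  rw [posPart_of_ne_top hx, ENNReal.ofReal_eq_zero]
  rcases eq_or_ne x ⊥ with rfl | hb
  · simp
  · exact EReal.toReal_le_toReal h hb (by simp) |>.trans (by simp)

lemma ePosPart_mono {x y : EReal} (h : x ≤ y) : x.posPart ≤ y.posPart := by
  rcases eq_or_ne y ⊤ with rfl | hy
  · simp [posPart_top']
  · have hx : x ≠ ⊤ := fun hx => hy (top_le_iff.1 (hx ▸ h))
    rw [posPart_of_ne_top hx, posPart_of_ne_top hy]
    rcases eq_or_ne x ⊥ with rfl | hb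
    · simp
    · exact ENNReal.ofReal_le_ofReal (EReal.toReal_le_toReal h hb hy)

lemma posPart_coe (v : ℝ) : ((v : ℝ) : EReal).posPart = ENNReal.ofReal v := by
  rw [posPart_of_ne_top (by simp)]; simp

lemma posPart_neg_coe (v : ℝ) : (-(v : EReal)).posPart = ENNReal.ofReal (-v) := by
  rw [show (-(v:EReal)) = ((-v : ℝ) : EReal) by exact_mod_cast (EReal.coe_neg v).symm, posPart_coe]

lemma posPart_neg_bot : (-(⊥ : EReal)).posPart = ⊤ := by
  rw [show (-(⊥:EReal)) = ⊤ by simp]; exact posPart_top'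

lemma posPart_neg_top : (-(⊤ : EReal)).posPart = 0 := by
  rw [show (-(⊤:EReal)) = ⊥ by simp, posPart_of_ne_top (by simp)]; simp

lemma measurable_ePosPart : Measurable (EReal.posPart) := by
  unfold EReal.posPart
  exact Measurable.ite (measurableSet_singleton _)
    measurable_const (ENNReal.measurable_ofReal.comp measurable_ereal_toReal)

lemma le_uscReg {n : ℕ} (f : Cn n → EReal) (z : Cn n) : f z ≤ uscRegularization f z :=
  le_limsup_of_frequently_le' (frequently_iff.2 fun hU => ⟨z, mem_of_mem_nhds hU, le_rfl⟩)

lemma uscReg_le_of_eventually {n : ℕ} {f : Cn n → EReal} {t : EReal} {z : Cn n}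
    (h : ∀ᶠ x in nhds z, f x ≤ t) : uscRegularization f z ≤ t :=
  (limsup_le_limsup h).trans (limsup_const t).le

lemma uscReg_mono {n : ℕ} {f g : Cn n → EReal} (h : ∀ x, f x ≤ g x) (z : Cn n) :
    uscRegularization f z ≤ uscRegularization g z :=
  limsup_le_limsup (Filter.Eventually.of_forall h)

lemma uscReg_usc {n : ℕ} (f : Cn n → EReal) : UpperSemicontinuous (uscRegularization f) := by
  intro x t ht
  obtain ⟨t', ht1, ht2⟩ := exists_between ht
  have h1 : ∀ᶠ w in nhds x, f w < t' := eventually_lt_of_limsup_lt ht1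
  obtain ⟨s, hs, hso, hxs⟩ := _root_.eventually_nhds_iff.1 h1
  filter_upwards [hso.mem_nhds hxs] with w hw
  have ev : ∀ᶠ y in nhds w, f y ≤ t' := by
    filter_upwards [hso.mem_nhds hw] with y hy using (hs y hy).le
  exact (uscReg_le_of_eventually ev).trans_lt ht2

lemma uscReg_le_sSup_ball {n : ℕ} {f : Cn n → EReal} {z : Cn n} {ρ : ℝ} (hρ : 0 < ρ) :
    uscRegularization f z ≤ sSup (f '' Metric.ball z ρ) := by
  apply uscReg_le_of_eventually
  filter_upwards [Metric.ball_mem_nhds z hρ] with x hx using le_sSup ⟨x, hx, rfl⟩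


lemma dilatedSup_le {u : Cn n → EReal} {a ε : ℝ} {z : Cn n} {t : EReal}
    (h : ∀ (φ : Cn n ≃ₗᵢ[ℂ] Cn n),
      ‖φ.toLinearIsometry.toContinuousLinearMap - ContinuousLinearMap.id ℂ (Cn n)‖ < a →
      ∀ r : ℝ, 0 ≤ r → r ≤ ε → u ((1 + r : ℝ) • φ z) ≤ t) :
    dilatedSup u a ε z ≤ t := by
  refine sSup_le ?_
  rintro y ⟨φ, hφ, r, h0, h1, rfl⟩
  exact h φ hφ r h0 h1

lemma le_dilatedSup {u : Cn n → EReal} {a ε : ℝ} {z : Cn n} (φ : Cn n ≃ₗᵢ[ℂ] Cn n)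
    (hφ : ‖φ.toLinearIsometry.toContinuousLinearMap - ContinuousLinearMap.id ℂ (Cn n)‖ < a)
    {r : ℝ} (h0 : 0 ≤ r) (h1 : r ≤ ε) :
    u ((1 + r : ℝ) • φ z) ≤ dilatedSup u a ε z :=
  le_sSup ⟨φ, hφ, r, h0, h1, rfl⟩

lemma exists_lt_dilatedSup {u : Cn n → EReal} {a ε : ℝ} {z : Cn n} {b : EReal}
    (h : b < dilatedSup u a ε z) :
    ∃ (φ : Cn n ≃ₗᵢ[ℂ] Cn n),
      ‖φ.toLinearIsometry.toContinuousLinearMap - ContinuousLinearMap.id ℂ (Cn n)‖ < a ∧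
      ∃ r : ℝ, 0 ≤ r ∧ r ≤ ε ∧ b < u ((1 + r : ℝ) • φ z) := by
  obtain ⟨y, ⟨φ, hφ, r, h0, h1, rfl⟩, hby⟩ := lt_sSup_iff.1 h
  exact ⟨φ, hφ, r, h0, h1, hby⟩

lemma refl_norm_lt {a : ℝ} (ha : 0 < a) :
    ‖(LinearIsometryEquiv.refl ℂ (Cn n)).toLinearIsometry.toContinuousLinearMap -
      ContinuousLinearMap.id ℂ (Cn n)‖ < a := by
  have : (LinearIsometryEquiv.refl ℂ (Cn n)).toLinearIsometry.toContinuousLinearMap -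
      ContinuousLinearMap.id ℂ (Cn n) = 0 := by
    ext x; simp
  rw [this, norm_zero]; exact ha

lemma u_le_dilatedSup {u : Cn n → EReal} {a ε : ℝ} (ha : 0 < a) (hε : 0 ≤ ε) (z : Cn n) :
    u z ≤ dilatedSup u a ε z := by
  have := le_dilatedSup (u := u) (z := z) (ε := ε) (LinearIsometryEquiv.refl ℂ (Cn n))
    (refl_norm_lt ha) le_rfl hε
  simpa using this

lemma dilatedSup_mono_par {u : Cn n → EReal} {a a' ε ε' : ℝ} (ha : a ≤ a') (hε : ε ≤ ε')
    (z : Cn n) : dilatedSup u a ε z ≤ dilatedSup u a' ε' z :=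
  dilatedSup_le fun φ hφ r h0 h1 => le_dilatedSup φ (hφ.trans_le ha) h0 (h1.trans hε)

lemma dilated_norm_lt {ε r : ℝ} (hε1 : ε < 1) {x : Cn n} (hx : ‖x‖ < 1 - ε)
    (φ : Cn n ≃ₗᵢ[ℂ] Cn n) (h0 : 0 ≤ r) (h1 : r ≤ ε) : ‖(1 + r : ℝ) • φ x‖ < 1 := by
  rw [norm_smul, Real.norm_eq_abs, abs_of_nonneg (by linarith : (0:ℝ) ≤ 1 + r), φ.norm_map]
  nlinarith [norm_nonneg x]

lemma phi_dist {a : ℝ} (φ : Cn n ≃ₗᵢ[ℂ] Cn n)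
    (hφ : ‖φ.toLinearIsometry.toContinuousLinearMap - ContinuousLinearMap.id ℂ (Cn n)‖ < a)
    (x : Cn n) : ‖φ x - x‖ ≤ a * ‖x‖ := by
  have h1 : φ x - x = (φ.toLinearIsometry.toContinuousLinearMap -
      ContinuousLinearMap.id ℂ (Cn n)) x := by
    simp
  rw [h1]
  calc _ ≤ ‖φ.toLinearIsometry.toContinuousLinearMap - ContinuousLinearMap.id ℂ (Cn n)‖ * ‖x‖ :=
        ContinuousLinearMap.le_opNorm _ x
  _ ≤ a * ‖x‖ := mul_le_mul_of_nonneg_right hφ.le (norm_nonneg x)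

lemma dilated_dist {a r : ℝ} (φ : Cn n ≃ₗᵢ[ℂ] Cn n)
    (hφ : ‖φ.toLinearIsometry.toContinuousLinearMap - ContinuousLinearMap.id ℂ (Cn n)‖ < a)
    (h0 : 0 ≤ r) (x z : Cn n) :
    ‖(1 + r : ℝ) • φ x - z‖ ≤ r * ‖x‖ + a * ‖x‖ + ‖x - z‖ := by
  have key : (1 + r : ℝ) • φ x - z = r • φ x + (φ x - x) + (x - z) := by
    have h : (1 + r : ℝ) • φ x = φ x + r • φ x := by rw [add_smul, one_smul]
    rw [h]; abel
  rw [key]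
  calc ‖r • φ x + (φ x - x) + (x - z)‖ ≤ ‖r • φ x + (φ x - x)‖ + ‖x - z‖ := norm_add_le _ _
  _ ≤ ‖r • φ x‖ + ‖φ x - x‖ + ‖x - z‖ := by
      have := norm_add_le (r • φ x) (φ x - x); linarith
  _ ≤ r * ‖x‖ + a * ‖x‖ + ‖x - z‖ := by
      have h2 : ‖r • φ x‖ = r * ‖x‖ := by
        rw [norm_smul, Real.norm_eq_abs, abs_of_nonneg h0, φ.norm_map]
      have h3 := phi_dist φ hφ x
      linarith

lemma dilate_add (φ : Cn n ≃ₗᵢ[ℂ] Cn n) (s : ℝ) (x y : Cn n) (c : ℂ) :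
    (s : ℝ) • φ x + c • ((s : ℝ) • φ y) = (s : ℝ) • φ (x + c • y) := by
  rw [map_add, φ.map_smul, smul_add, smul_comm]

lemma circle_abs {r : ℝ} (θ : ℝ) (h0 : 0 ≤ r) :
    ‖(r : ℂ) * Complex.exp ((θ : ℂ) * Complex.I)‖ = r := by
  rw [norm_mul, Complex.norm_exp_ofReal_mul_I, Complex.norm_real, mul_one, Real.norm_eq_abs, abs_of_nonneg h0]

lemma lint_posPart_zero {f : ℝ → EReal} (h : ∀ θ ∈ Set.Ioc (0:ℝ) (2*Real.pi), f θ ≤ 0) :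
    ∫⁻ θ, (f θ).posPart ∂(volume.restrict (Set.Ioc (0:ℝ) (2*Real.pi))) = 0 := by
  rw [← lintegral_zero (μ := volume.restrict (Set.Ioc (0:ℝ) (2*Real.pi)))]
  exact lintegral_congr_ae ((ae_restrict_iff' measurableSet_Ioc).2
    (Filter.Eventually.of_forall fun θ hθ => ePosPart_nonpos (h θ hθ)))

lemma erealIntegral_nonpos_eq {f : ℝ → EReal} (h : ∀ θ ∈ Set.Ioc (0:ℝ) (2*Real.pi), f θ ≤ 0) :
    erealIntegral (volume.restrict (Set.Ioc (0:ℝ) (2*Real.pi))) f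
      = -(((∫⁻ θ, (-(f θ)).posPart ∂(volume.restrict (Set.Ioc (0:ℝ) (2*Real.pi)))) : ℝ≥0∞) :
          EReal) := by
  rw [erealIntegral, lint_posPart_zero h, show (((0:ℝ≥0∞)) : EReal) = (0:EReal) by simp, zero_sub]

lemma coe_ennreal_eq_toReal {x : ℝ≥0∞} (h : x ≠ ⊤) : (x : EReal) = ((x.toReal : ℝ) : EReal) := by
  rw [← ENNReal.ofReal_toReal h]; simp

lemma dilatedSup_nonpos {u : Cn n → EReal} (hneg : ∀ z ∈ Metric.ball (0:Cn n) 1, u z < 0)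
    {a ε : ℝ} (hε1 : ε < 1) {x : Cn n} (hx : ‖x‖ < 1 - ε) : dilatedSup u a ε x ≤ 0 :=
  dilatedSup_le fun φ hφ s h0 h1 =>
    (hneg _ (mem_ball_zero_iff.2 (dilated_norm_lt hε1 hx φ h0 h1))).le

lemma dilatedSupStar_nonpos {u : Cn n → EReal} (hneg : ∀ z ∈ Metric.ball (0:Cn n) 1, u z < 0)
    {a ε : ℝ} (hε1 : ε < 1) {z : Cn n} (hz : z ∈ Metric.ball (0:Cn n) (1 - ε)) :
    dilatedSupStar u a ε z ≤ 0 := by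
  apply uscReg_le_of_eventually
  filter_upwards [isOpen_ball.mem_nhds hz] with x hx
  exact dilatedSup_nonpos hneg hε1 (mem_ball_zero_iff.1 hx)

lemma u_submean_enn {u : Cn n → EReal}
    (hpsh : PlurisubharmonicOn (Metric.ball (0:Cn n) 1) u)
    (hneg : ∀ z ∈ Metric.ball (0:Cn n) 1, u z < 0) {p q : Cn n} {r : ℝ}
    (hp : p ∈ Metric.ball (0:Cn n) 1) (hr : 0 < r)
    (hcirc : ∀ c : ℂ, ‖c‖ ≤ r → p + c • q ∈ Metric.ball (0:Cn n) 1) :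
    ∫⁻ θ in Set.Ioc (0:ℝ) (2*Real.pi),
        (-(u (p + ((r:ℂ) * Complex.exp ((θ:ℂ) * Complex.I)) • q))).posPart
      ≤ ENNReal.ofReal (2*Real.pi) * (-(u p)).posPart := by
  have hsub := hpsh.2.2 p hp q r hr hcirc
  rw [erealIntegral] at hsub
  rw [lint_posPart_zero (fun θ hθ => (hneg _ (hcirc _ (by rw [circle_abs θ hr.le]))).le)] at hsub
  rw [show (((0:ℝ≥0∞)) : EReal) = (0:EReal) by simp, zero_sub] at hsub
  set B := ∫⁻ θ in Set.Ioc (0:ℝ) (2*Real.pi),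
      (-(u (p + ((r:ℂ) * Complex.exp ((θ:ℂ) * Complex.I)) • q))).posPart with hB
  rcases eq_or_ne (u p) ⊥ with hb | hb
  · rw [hb, posPart_neg_bot, ENNReal.mul_top (by positivity)]
    exact le_top
  · obtain ⟨v, hv⟩ : ∃ v : ℝ, u p = (v : EReal) :=
      ⟨(u p).toReal, (EReal.coe_toReal (hneg p hp).ne_top hb).symm⟩
    rw [hv] at hsub ⊢
    rw [posPart_neg_coe]
    have hBne : B ≠ ⊤ := by
      intro hBt
      rw [show ((2*Real.pi:ℝ):EReal) * ((v:ℝ):EReal) = ((2*Real.pi*v : ℝ):EReal) from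
        (EReal.coe_mul _ _).symm, hBt, EReal.coe_ennreal_top, EReal.neg_top] at hsub
      exact EReal.coe_ne_bot _ (le_bot_iff.1 hsub)
    rw [coe_ennreal_eq_toReal hBne,
      show ((2*Real.pi:ℝ):EReal) * ((v:ℝ):EReal) = ((2*Real.pi*v : ℝ):EReal) from
        (EReal.coe_mul _ _).symm,
      show (-((B.toReal:ℝ):EReal)) = ((-B.toReal:ℝ):EReal) by exact_mod_cast (EReal.coe_neg _).symm,
      EReal.coe_le_coe_iff] at hsub
    calc B = ENNReal.ofReal B.toReal := (ENNReal.ofReal_toReal hBne).symm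
    _ ≤ ENNReal.ofReal (2*Real.pi * (-v)) := ENNReal.ofReal_le_ofReal (by linarith)
    _ = ENNReal.ofReal (2*Real.pi) * ENNReal.ofReal (-v) := ENNReal.ofReal_mul (by positivity)

end Aux

section Aux2


lemma F_submean_enn {u : Cn n → EReal}
    (hpsh : PlurisubharmonicOn (Metric.ball (0:Cn n) 1) u)
    (hneg : ∀ z ∈ Metric.ball (0:Cn n) 1, u z < 0) {a ε : ℝ}
    (hε1 : ε < 1) {z' w : Cn n} {r : ℝ} (hr : 0 < r)
    (hcirc : ∀ c : ℂ, ‖c‖ ≤ r → z' + c • w ∈ Metric.ball (0:Cn n) (1 - ε)) :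
    ∫⁻ θ in Set.Ioc (0:ℝ) (2*Real.pi),
        (-(dilatedSup u a ε (z' + ((r:ℂ) * Complex.exp ((θ:ℂ) * Complex.I)) • w))).posPart
      ≤ ENNReal.ofReal (2*Real.pi) * (-(dilatedSup u a ε z')).posPart := by
  have hz' : ‖z'‖ < 1 - ε := by
    have := hcirc 0 (by simp [hr.le])
    rw [show z' + (0:ℂ) • w = z' by simp] at this
    exact mem_ball_zero_iff.1 this
  have step : ∀ (φ : Cn n ≃ₗᵢ[ℂ] Cn n),
      ‖φ.toLinearIsometry.toContinuousLinearMap - ContinuousLinearMap.id ℂ (Cn n)‖ < a →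
      ∀ s : ℝ, 0 ≤ s → s ≤ ε →
      (∫⁻ θ in Set.Ioc (0:ℝ) (2*Real.pi),
        (-(dilatedSup u a ε (z' + ((r:ℂ) * Complex.exp ((θ:ℂ) * Complex.I)) • w))).posPart)
        ≤ ENNReal.ofReal (2*Real.pi) * (-(u ((1 + s : ℝ) • φ z'))).posPart := by
    intro φ hφ s h0 h1
    have hp : ((1 + s : ℝ) • φ z') ∈ Metric.ball (0:Cn n) 1 :=
      mem_ball_zero_iff.2 (dilated_norm_lt hε1 hz' φ h0 h1)
    have hcirc' : ∀ c : ℂ, ‖c‖ ≤ r →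
        (1 + s : ℝ) • φ z' + c • ((1 + s : ℝ) • φ w) ∈ Metric.ball (0:Cn n) 1 := by
      intro c hc
      rw [dilate_add]
      exact mem_ball_zero_iff.2
        (dilated_norm_lt hε1 (mem_ball_zero_iff.1 (hcirc c hc)) φ h0 h1)
    refine le_trans (lintegral_mono fun θ => ?_) (u_submean_enn hpsh hneg hp hr hcirc')
    apply ePosPart_mono
    apply EReal.neg_le_neg_iff.2
    rw [dilate_add]
    exact le_dilatedSup φ hφ h0 h1
  have hF0 : dilatedSup u a ε z' ≤ 0 := dilatedSup_nonpos hneg hε1 hz'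
  rcases eq_or_ne (dilatedSup u a ε z') ⊥ with hb | hb
  · rw [hb, posPart_neg_bot, ENNReal.mul_top (by positivity)]
    exact le_top
  obtain ⟨f', hf'⟩ : ∃ f' : ℝ, dilatedSup u a ε z' = (f' : EReal) :=
    ⟨_, (EReal.coe_toReal (hF0.trans_lt (by simp)).ne hb).symm⟩
  rw [hf', posPart_neg_coe]
  apply ENNReal.le_of_forall_pos_le_add
  intro η hη _
  set δ : ℝ := (η:ℝ) / (2*Real.pi + 1) with hδdef
  have hδ0 : 0 < δ := div_pos (by exact_mod_cast hη) (by positivity)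
  have hlt : ((f' - δ : ℝ) : EReal) < dilatedSup u a ε z' := by
    rw [hf']; exact_mod_cast (by linarith : f' - δ < f')
  obtain ⟨φ, hφ, s, h0, h1, hy⟩ := exists_lt_dilatedSup hlt
  calc (∫⁻ θ in Set.Ioc (0:ℝ) (2*Real.pi),
        (-(dilatedSup u a ε (z' + ((r:ℂ) * Complex.exp ((θ:ℂ) * Complex.I)) • w))).posPart)
      ≤ ENNReal.ofReal (2*Real.pi) * (-(u ((1 + s : ℝ) • φ z'))).posPart := step φ hφ s h0 h1
  _ ≤ ENNReal.ofReal (2*Real.pi) * ENNReal.ofReal (-(f' - δ)) := by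
      gcongr
      calc (-(u ((1 + s : ℝ) • φ z'))).posPart
          ≤ (-(((f' - δ : ℝ)) : EReal)).posPart := ePosPart_mono (EReal.neg_le_neg_iff.2 hy.le)
      _ = ENNReal.ofReal (-(f' - δ)) := posPart_neg_coe _
  _ ≤ ENNReal.ofReal (2*Real.pi) * (ENNReal.ofReal (-f') + ENNReal.ofReal δ) := by
      gcongr
      rw [show -(f' - δ) = -f' + δ by ring]
      exact ENNReal.ofReal_add_le
  _ = ENNReal.ofReal (2*Real.pi) * ENNReal.ofReal (-f')
        + ENNReal.ofReal (2*Real.pi) * ENNReal.ofReal δ := mul_add _ _ _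
  _ ≤ ENNReal.ofReal (2*Real.pi) * ENNReal.ofReal (-f') + η := by
      gcongr
      rw [← ENNReal.ofReal_mul (by positivity), ← ENNReal.ofReal_coe_nnreal]
      apply ENNReal.ofReal_le_ofReal
      rw [hδdef, mul_comm, div_mul_eq_mul_div, div_le_iff₀ (by positivity)]
      nlinarith [η.coe_nonneg, Real.pi_pos]

lemma le_liminf_ePosPart {f : Cn n → EReal} (hf : UpperSemicontinuous f) {p : Cn n}
    {ps : ℕ → Cn n} (htend : Tendsto ps atTop (𝓝 p)) :
    (-(f p)).posPart ≤ liminf (fun k => (-(f (ps k))).posPart) atTop := by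
  have key : ∀ t : ℝ, f p < (t : EReal) →
      ENNReal.ofReal (-t) ≤ liminf (fun k => (-(f (ps k))).posPart) atTop := by
    intro t ht
    have hev : ∀ᶠ k in atTop, f (ps k) < (t : EReal) := htend.eventually (hf p _ ht)
    refine le_liminf_of_le (by isBoundedDefault) ?_
    filter_upwards [hev] with k hk
    rw [← posPart_neg_coe]
    exact ePosPart_mono (EReal.neg_le_neg_iff.2 hk.le)
  rcases eq_or_ne (f p) ⊤ with htop | htop
  · rw [htop, posPart_neg_top]; exact zero_le
  rcases eq_or_ne (f p) ⊥ with hbot | hbot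
  · rw [hbot, posPart_neg_bot, top_le_iff]
    by_contra hne
    set L := liminf (fun k => (-(f (ps k))).posPart) atTop with hL
    have hlt : L < ⊤ := lt_top_iff_ne_top.2 hne
    have h2 := key (-(L.toReal + 1)) (by rw [hbot]; exact bot_lt_iff_ne_bot.2 (EReal.coe_ne_bot _))
    rw [neg_neg] at h2
    have h3 : L < ENNReal.ofReal (L.toReal + 1) := by
      conv_lhs => rw [← ENNReal.ofReal_toReal hlt.ne]
      exact (ENNReal.ofReal_lt_ofReal_iff (by positivity)).2 (by linarith)
    exact absurd (h2.trans_lt h3) (lt_irrefl _)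
  obtain ⟨v, hv⟩ : ∃ v : ℝ, f p = (v : EReal) := ⟨_, (EReal.coe_toReal htop hbot).symm⟩
  rw [hv, posPart_neg_coe]
  apply ENNReal.le_of_forall_pos_le_add
  intro η hη _
  have h2 := key (v + η) (by rw [hv]; exact_mod_cast lt_add_of_pos_right v (show (0:ℝ) < η from hη))
  calc ENNReal.ofReal (-v) ≤ ENNReal.ofReal (-(v + η)) + ENNReal.ofReal η := by
        rw [show (-v : ℝ) = -(v + η) + η by ring]; exact ENNReal.ofReal_add_le
  _ ≤ liminf (fun k => (-(f (ps k))).posPart) atTop + η := by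
      rw [ENNReal.ofReal_coe_nnreal]; exact add_le_add h2 le_rfl

end Aux2

section Aux3


lemma G_submean {u : Cn n → EReal}
    (hpsh : PlurisubharmonicOn (Metric.ball (0:Cn n) 1) u)
    (hneg : ∀ z ∈ Metric.ball (0:Cn n) 1, u z < 0) {a ε : ℝ}
    (hε1 : ε < 1) {z w : Cn n} {r : ℝ}
    (hz : z ∈ Metric.ball (0:Cn n) (1 - ε)) (hr : 0 < r)
    (hcirc : ∀ c : ℂ, ‖c‖ ≤ r → z + c • w ∈ Metric.ball (0:Cn n) (1 - ε)) :
    ((2 * Real.pi : ℝ) : EReal) * dilatedSupStar u a ε z ≤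
      erealIntegral (volume.restrict (Set.Ioc (0 : ℝ) (2 * Real.pi)))
        (fun θ => dilatedSupStar u a ε (z + ((r : ℂ) * Complex.exp (θ * Complex.I)) • w)) := by
  -- the circle points are in the ball of radius 1 - ε, with some margin
  have hcont : Continuous fun c : ℂ => ‖z + c • w‖ :=
    (continuous_const.add ((continuous_id.smul continuous_const : Continuous fun c : ℂ => c • w))).norm
  obtain ⟨c₀, hc₀mem, hc₀max⟩ := (isCompact_closedBall (0:ℂ) r).exists_isMaxOn
    ⟨0, by simp [hr.le]⟩ hcont.continuousOn
  set m := ‖z + c₀ • w‖ with hm_def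
  have hm : m < 1 - ε := mem_ball_zero_iff.1 (hcirc c₀ (by
    exact mem_closedBall_zero_iff.1 hc₀mem))
  have hgood : ∀ z' : Cn n, dist z' z < 1 - ε - m →
      ∀ c : ℂ, ‖c‖ ≤ r → z' + c • w ∈ Metric.ball (0:Cn n) (1 - ε) := by
    intro z' hz' c hc
    have h1 : ‖z + c • w‖ ≤ m := hc₀max (mem_closedBall_zero_iff.2 (by
      exact hc))
    have h2 : ‖z' + c • w‖ ≤ ‖z + c • w‖ + ‖z' - z‖ := by
      have : z' + c • w = (z + c • w) + (z' - z) := by abel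
      rw [this]; exact norm_add_le _ _
    rw [dist_eq_norm] at hz'
    exact mem_ball_zero_iff.2 (by linarith)
  have hδ'0 : 0 < 1 - ε - m := by linarith
  -- rewrite the RHS
  have hGcirc : ∀ θ ∈ Set.Ioc (0:ℝ) (2*Real.pi),
      dilatedSupStar u a ε (z + ((r : ℂ) * Complex.exp ((θ:ℂ) * Complex.I)) • w) ≤ 0 :=
    fun θ _ => dilatedSupStar_nonpos hneg hε1 (hcirc _ (by rw [circle_abs θ hr.le]))
  rw [erealIntegral_nonpos_eq hGcirc]
  have hGz : dilatedSupStar u a ε z ≤ 0 := dilatedSupStar_nonpos hneg hε1 hz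
  rcases eq_or_ne (dilatedSupStar u a ε z) ⊥ with hb | hb
  · rw [hb, EReal.mul_bot_of_pos (by exact_mod_cast Real.two_pi_pos)]
    exact bot_le
  obtain ⟨g, hg⟩ : ∃ g : ℝ, dilatedSupStar u a ε z = (g : EReal) :=
    ⟨_, (EReal.coe_toReal (hGz.trans_lt (by simp)).ne hb).symm⟩
  have hg0 : g ≤ 0 := by exact_mod_cast hg ▸ hGz
  -- choose an approximating sequence
  have hpick : ∀ k : ℕ, ∃ zk : Cn n, dist zk z < min (1 - ε - m) (1/((k:ℝ)+1)) ∧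
      ((g - 1/((k:ℝ)+1) : ℝ) : EReal) < dilatedSup u a ε zk := by
    intro k
    have h1 : ((g - 1/((k:ℝ)+1) : ℝ) : EReal) < dilatedSupStar u a ε z := by
      rw [hg]; exact_mod_cast sub_lt_self g (by positivity)
    have h2 : dilatedSupStar u a ε z ≤
        sSup (dilatedSup u a ε '' Metric.ball z (min (1 - ε - m) (1/((k:ℝ)+1)))) :=
      uscReg_le_sSup_ball (by positivity)
    obtain ⟨y, ⟨zk, hzk, rfl⟩, hlt⟩ := lt_sSup_iff.1 (h1.trans_le h2)
    exact ⟨zk, mem_ball.1 hzk, hlt⟩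
  choose zs hzs1 hzs2 using hpick
  have hzs_good : ∀ k, ∀ c : ℂ, ‖c‖ ≤ r →
      zs k + c • w ∈ Metric.ball (0:Cn n) (1 - ε) :=
    fun k => hgood _ ((hzs1 k).trans_le (min_le_left _ _))
  have hzs_mem : ∀ k, ‖zs k‖ < 1 - ε := by
    intro k
    have := hzs_good k 0 (by simp [hr.le])
    rw [show zs k + (0:ℂ) • w = zs k by simp] at this
    exact mem_ball_zero_iff.1 this
  have htend : Tendsto zs atTop (𝓝 z) := by
    rw [tendsto_iff_dist_tendsto_zero]
    refine squeeze_zero (fun k => dist_nonneg)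
      (fun k => ((hzs1 k).trans_le (min_le_right _ _)).le)
      tendsto_one_div_add_atTop_nhds_zero_nat
  -- Fatou argument
  set G := dilatedSupStar u a ε with hGdef
  set F := dilatedSup u a ε with hFdef
  have hGF : ∀ x, F x ≤ G x := fun x => le_uscReg F x
  have hNG_meas : Measurable (fun x : Cn n => (-(G x)).posPart) :=
    measurable_ePosPart.comp (measurable_neg.comp (uscReg_usc F).measurable)
  have hcontc : ∀ x : Cn n, Continuous fun θ : ℝ =>
      x + ((r : ℂ) * Complex.exp ((θ:ℂ) * Complex.I)) • w := by
    intro x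
    apply continuous_const.add
    exact (continuous_const.mul ((Complex.continuous_ofReal.mul continuous_const).cexp)).smul
      continuous_const
  have hmeas : ∀ k, Measurable fun θ : ℝ =>
      (-(G (zs k + ((r : ℂ) * Complex.exp ((θ:ℂ) * Complex.I)) • w))).posPart :=
    fun k => hNG_meas.comp (hcontc (zs k)).measurable
  have hpt : ∀ θ : ℝ,
      (-(G (z + ((r : ℂ) * Complex.exp ((θ:ℂ) * Complex.I)) • w))).posPart ≤
      liminf (fun k => (-(G (zs k + ((r : ℂ) * Complex.exp ((θ:ℂ) * Complex.I)) • w))).posPart)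
        atTop := by
    intro θ
    apply le_liminf_ePosPart (uscReg_usc F)
    exact Tendsto.add htend tendsto_const_nhds
  have fatou : (∫⁻ θ in Set.Ioc (0:ℝ) (2*Real.pi),
        (-(G (z + ((r : ℂ) * Complex.exp ((θ:ℂ) * Complex.I)) • w))).posPart)
      ≤ liminf (fun k => ∫⁻ θ in Set.Ioc (0:ℝ) (2*Real.pi),
        (-(G (zs k + ((r : ℂ) * Complex.exp ((θ:ℂ) * Complex.I)) • w))).posPart) atTop :=
    (lintegral_mono fun θ => hpt θ).trans (lintegral_liminf_le hmeas)
  have step12 : ∀ k, (∫⁻ θ in Set.Ioc (0:ℝ) (2*Real.pi),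
        (-(G (zs k + ((r : ℂ) * Complex.exp ((θ:ℂ) * Complex.I)) • w))).posPart)
      ≤ ENNReal.ofReal (2*Real.pi) * (-(F (zs k))).posPart := by
    intro k
    refine le_trans (lintegral_mono fun θ => ePosPart_mono (EReal.neg_le_neg_iff.2 (hGF _))) ?_
    exact F_submean_enn hpsh hneg hε1 hr (hzs_good k)
  have hNFk : ∀ k, (-(F (zs k))).posPart ≤
      ENNReal.ofReal (-g) + ENNReal.ofReal (1/((k:ℝ)+1)) := by
    intro k
    have h1 : -(F (zs k)) ≤ ((-(g - 1/((k:ℝ)+1)) : ℝ) : EReal) := by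
      rw [show ((-(g - 1/((k:ℝ)+1)) : ℝ) : EReal) = -(((g - 1/((k:ℝ)+1) : ℝ)) : EReal) by
        exact_mod_cast EReal.coe_neg _]
      exact EReal.neg_le_neg_iff.2 (hzs2 k).le
    calc (-(F (zs k))).posPart ≤ (((-(g - 1/((k:ℝ)+1)) : ℝ) : EReal)).posPart := ePosPart_mono h1
    _ = ENNReal.ofReal (-(g - 1/((k:ℝ)+1))) := posPart_coe _
    _ ≤ ENNReal.ofReal (-g) + ENNReal.ofReal (1/((k:ℝ)+1)) := by
        rw [show -(g - 1/((k:ℝ)+1)) = -g + 1/((k:ℝ)+1) by ring]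
        exact ENNReal.ofReal_add_le
  have hlim : Tendsto (fun k : ℕ => ENNReal.ofReal (2*Real.pi) *
      (ENNReal.ofReal (-g) + ENNReal.ofReal (1/((k:ℝ)+1)))) atTop
      (𝓝 (ENNReal.ofReal (2*Real.pi) * ENNReal.ofReal (-g))) := by
    have h0 : Tendsto (fun k : ℕ => ENNReal.ofReal (1/((k:ℝ)+1))) atTop (𝓝 0) := by
      have := ENNReal.tendsto_ofReal (tendsto_one_div_add_atTop_nhds_zero_nat)
      simpa using this
    have h1 : Tendsto (fun k : ℕ => ENNReal.ofReal (-g) + ENNReal.ofReal (1/((k:ℝ)+1))) atTop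
        (𝓝 (ENNReal.ofReal (-g) + 0)) :=
      Tendsto.add tendsto_const_nhds h0
    have h2 := ENNReal.Tendsto.const_mul (a := ENNReal.ofReal (2*Real.pi)) h1
      (Or.inr ENNReal.ofReal_ne_top)
    simpa using h2
  have main : (∫⁻ θ in Set.Ioc (0:ℝ) (2*Real.pi),
        (-(G (z + ((r : ℂ) * Complex.exp ((θ:ℂ) * Complex.I)) • w))).posPart)
      ≤ ENNReal.ofReal (2*Real.pi) * ENNReal.ofReal (-g) := by
    refine fatou.trans ?_
    refine le_trans (liminf_le_liminf (Filter.Eventually.of_forall fun k =>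
      (step12 k).trans (mul_le_mul_right (hNFk k) _))) ?_
    exact le_of_eq hlim.liminf_eq
  -- conversion back to EReal
  set IG := ∫⁻ θ in Set.Ioc (0:ℝ) (2*Real.pi),
      (-(G (z + ((r : ℂ) * Complex.exp ((θ:ℂ) * Complex.I)) • w))).posPart with hIGdef
  have hIGne : IG ≠ ⊤ :=
    (main.trans_lt (ENNReal.mul_lt_top ENNReal.ofReal_lt_top ENNReal.ofReal_lt_top)).ne
  have hIGle : IG.toReal ≤ 2*Real.pi * (-g) := by
    have h1 := ENNReal.toReal_mono
      (ENNReal.mul_ne_top ENNReal.ofReal_ne_top ENNReal.ofReal_ne_top) main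
    rw [ENNReal.toReal_mul, ENNReal.toReal_ofReal Real.two_pi_pos.le,
      ENNReal.toReal_ofReal (by linarith)] at h1
    exact h1
  rw [hg, coe_ennreal_eq_toReal hIGne,
    show ((2*Real.pi:ℝ):EReal) * ((g:ℝ):EReal) = ((2*Real.pi*g : ℝ):EReal) from
      (EReal.coe_mul _ _).symm,
    show (-((IG.toReal:ℝ):EReal)) = ((-IG.toReal:ℝ):EReal) by
      exact_mod_cast (EReal.coe_neg _).symm,
    EReal.coe_le_coe_iff]
  linarith

end Aux3

theorem statement_16 {n : ℕ} (u : Cn n → EReal)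
    (hpsh : PlurisubharmonicOn (Metric.ball (0 : Cn n) 1) u)
    (hneg : ∀ z ∈ Metric.ball (0 : Cn n) 1, u z < 0) :
    (∀ a ε : ℝ, 0 < a → a < 1 → 0 < ε → ε < 1 →
        PlurisubharmonicOn (Metric.ball (0 : Cn n) (1 - ε)) (dilatedSupStar u a ε)) ∧
      ∀ z ∈ Metric.ball (0 : Cn n) 1, ∃ g : ℝ → EReal,
        (∀ a : ℝ, 0 < a → a < 1 →
          Filter.Tendsto (fun ε => dilatedSupStar u a ε z)
            (nhdsWithin 0 (Set.Ioi 0)) (nhds (g a))) ∧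
        Filter.Tendsto g (nhdsWithin 0 (Set.Ioi 0)) (nhds (u z)) := by
  constructor
  · intro a ε ha0 ha1 hε0 hε1
    refine ⟨(uscReg_usc (dilatedSup u a ε)).upperSemicontinuousOn _,
      fun z hz => ((dilatedSupStar_nonpos hneg hε1 hz).trans_lt (by simp : (0:EReal) < ⊤)).ne,
      fun z hz w r hr hcirc => G_submean hpsh hneg hε1 hz hr hcirc⟩
  · intro z hz
    set g : ℝ → EReal := fun a => sInf ((fun ε => dilatedSupStar u a ε z) '' Set.Ioi 0)
      with hgdef
    have hmono_ε : ∀ a : ℝ, Monotone (fun ε => dilatedSupStar u a ε z) :=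
      fun a ε1 ε2 h => uscReg_mono (fun x => dilatedSup_mono_par le_rfl h x) z
    have hgmono : Monotone g := by
      intro a1 a2 h
      refine le_sInf ?_
      rintro y ⟨ε, hε, rfl⟩
      exact (sInf_le (Set.mem_image_of_mem _ hε)).trans
        (uscReg_mono (fun x => dilatedSup_mono_par h le_rfl x) z)
    refine ⟨g, fun a ha0 ha1 => (hmono_ε a).tendsto_nhdsGT 0, ?_⟩
    have htend := hgmono.tendsto_nhdsGT 0
    suffices hsInf : sInf (g '' Set.Ioi 0) = u z by rwa [hsInf] at htend
    apply le_antisymm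
    · by_contra hcon
      push_neg at hcon
      obtain ⟨t, ht1, ht2⟩ := EReal.exists_between_coe_real hcon
      have husc : ∀ᶠ x in 𝓝 z, u x < (t : EReal) := by
        have h1 := hpsh.1 z hz ((t : EReal)) ht1
        rwa [nhdsWithin_eq_nhds.2 (isOpen_ball.mem_nhds hz)] at h1
      obtain ⟨δ, hδ0, hδ⟩ := Metric.eventually_nhds_iff.1 husc
      set R := ‖z‖ + 1 with hR
      have hR0 : 0 < R := by positivity
      set b := min (δ/(4*R)) 2⁻¹ with hb
      have hb0 : 0 < b := lt_min (by positivity) (by norm_num)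
      have hkey : dilatedSupStar u b b z ≤ (t : EReal) := by
        apply uscReg_le_of_eventually
        filter_upwards [Metric.ball_mem_nhds z
          (lt_min (by positivity : (0:ℝ) < δ/4) one_pos)] with x hx
        refine dilatedSup_le fun φ hφ s h0 h1 => (hδ ?_).le
        have hxz : ‖x - z‖ < min (δ/4) 1 := mem_ball_iff_norm.1 hx
        have hxn : ‖x‖ ≤ R := by
          have h2 : ‖x‖ ≤ ‖z‖ + ‖x - z‖ := by
            calc ‖x‖ = ‖z + (x - z)‖ := by rw [add_sub_cancel]
            _ ≤ ‖z‖ + ‖x - z‖ := norm_add_le _ _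
          have h3 : ‖x - z‖ < 1 := hxz.trans_le (min_le_right _ _)
          rw [hR]; linarith
        have hdd := dilated_dist φ hφ h0 x z
        rw [dist_eq_norm]
        have hb2 : b ≤ δ/(4*R) := min_le_left _ _
        have h4 : s * ‖x‖ ≤ (δ/(4*R)) * R :=
          mul_le_mul (h1.trans hb2) hxn (norm_nonneg x) (by positivity)
        have h5 : b * ‖x‖ ≤ (δ/(4*R)) * R := mul_le_mul hb2 hxn (norm_nonneg x) (by positivity)
        have h6 : (δ/(4*R)) * R = δ/4 := by field_simp
        have h7 : ‖x - z‖ < δ/4 := hxz.trans_le (min_le_left _ _)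
        rw [h6] at h4 h5
        calc ‖(1+s:ℝ) • φ x - z‖ ≤ s * ‖x‖ + b * ‖x‖ + ‖x - z‖ := hdd
        _ < δ := by linarith
      have hgb : g b ≤ (t:EReal) := (sInf_le (Set.mem_image_of_mem _ hb0)).trans hkey
      exact absurd ((sInf_le (Set.mem_image_of_mem g hb0) : sInf (g '' Set.Ioi 0) ≤ g b).trans hgb)
        (not_le.2 ht2)
    · apply le_sInf
      rintro y ⟨a, ha, rfl⟩
      apply le_sInf
      rintro y ⟨ε, hε, rfl⟩
      exact (u_le_dilatedSup ha (le_of_lt hε) z).trans (le_uscReg _ z)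


end
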